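/- Let ⟨A,C⟩ be a Betweenness instance with solution order O, and build the combinatorial drawing of the reduction graph by placing, on every level, each vertex at the rank of its associated element of A in O (v and w placed arbitrarily on their singleton levels). Then for every triple t_i = ⟨α,β,δ⟩ ∈ C, the three vertices u_α(i), u_β(i), u_δ(i) on level 2i appear either in the order (u_α(i), u_β(i), u_δ(i)) or its reverse, and in both cases the resulting order on level 2i is compatible with the binary tree T_{2i} having α separated first. -/

import Mathlib

inductive RTree (L : Type*) : Type _
  | leaf (l : L) : RTree L
  | node (children : List (RTree L)) : RTree L

def RTree.leaves {L : Type*} : RTree L → List L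
  | .leaf l => [l]
  | .node cs => cs.attach.flatMap (fun c => c.1.leaves)
decreasing_by
  have := List.sizeOf_lt_of_mem c.2
  simp only [RTree.node.sizeOf_spec]
  omega

inductive RTree.Subtree {L : Type*} : RTree L → RTree L → Prop
  | refl (t : RTree L) : Subtree t t
  | child {s c : RTree L} {cs : List (RTree L)} : c ∈ cs → Subtree s c → Subtree s (RTree.node cs)

def RTree.leafSet {L : Type*} (t : RTree L) : Set L := {l | l ∈ t.leaves}

def IsInterval {L : Type*} (r : L → L → Prop) (U S : Set L) : Prop :=
  ∀ x y z, x ∈ S → z ∈ S → y ∈ U → r x y → r y z → y ∈ S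

def Compatible {L : Type*} (r : L → L → Prop) (T : RTree L) : Prop :=
  ∀ s, RTree.Subtree s T → IsInterval r T.leafSet s.leafSet

lemma subtree_leaf {L : Type*} {s : RTree L} {l : L} (h : RTree.Subtree s (RTree.leaf l)) :
    s = RTree.leaf l := by cases h; rfl

lemma leaf_interval {A : Type*} (r : A → A → Prop) [IsStrictTotalOrder A r] (U : Set A)
    (l : A) : IsInterval r U ((RTree.leaf l).leafSet) := by
  intro x y z hx hz _ hxy hyz
  simp only [RTree.leafSet, RTree.leaves, List.mem_singleton, Set.mem_setOf_eq] at hx hz ⊢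
  subst hx; subst hz
  exact absurd (Trans.trans hxy hyz) (irrefl_of r _)

theorem triple_level_compatible {A : Type*} (r : A → A → Prop) [IsStrictTotalOrder A r]
    (C : Set (A × A × A))
    (hsol : ∀ t ∈ C, (r t.1 t.2.1 ∧ r t.2.1 t.2.2) ∨ (r t.2.2 t.2.1 ∧ r t.2.1 t.1))
    (α β δ : A) (ht : (α, β, δ) ∈ C)
    (hd1 : α ≠ β) (hd2 : β ≠ δ) (hd3 : α ≠ δ) :
    ((r α β ∧ r β δ) ∨ (r δ β ∧ r β α)) ∧
      Compatible r (RTree.node [RTree.leaf α, RTree.node [RTree.leaf β, RTree.leaf δ]]) := by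
  have hc := hsol _ ht
  refine ⟨hc, ?_⟩
  intro s hs
  -- enumerate subtrees
  rcases hs with _ | ⟨hm, hsub⟩
  · -- whole tree: S = U
    intro x y z hx hz hy _ _
    exact hy
  · rcases List.mem_pair.mp hm with h | h
    · subst h
      rw [subtree_leaf hsub]
      exact leaf_interval r _ α
    · subst h
      rcases hsub with _ | ⟨hm2, hsub2⟩
      · -- s = node [leaf β, leaf δ]
        intro x y z hx hz hy hxy hyz
        simp only [RTree.leafSet, RTree.leaves, Set.mem_setOf_eq, List.attach,
          List.attachWith, List.flatMap, List.pmap, List.map, List.flatten,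
          List.mem_append, List.mem_singleton, List.mem_cons,
          List.not_mem_nil, or_false, List.append_nil, List.append_eq] at hx hz hy ⊢
        rcases hy with hy | hy | hy
        · subst hy
          exfalso
          rcases hc with ⟨h1, h2⟩ | ⟨h1, h2⟩
          · rcases hx with hx | hx <;> subst hx
            · exact asymm_of r h1 hxy
            · exact asymm_of r (Trans.trans h1 h2) hxy
          · rcases hz with hz | hz <;> subst hz
            · exact asymm_of r h2 hyz
            · exact asymm_of r (Trans.trans h1 h2) hyz
        · exact Or.inl hy
        · exact Or.inr hy
      · rcases List.mem_pair.mp hm2 with h | h <;> subst h <;>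
          rw [subtree_leaf hsub2] <;> exact leaf_interval r _ _
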